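/- (Three-leg to quad correspondence for Q3(δ=0).) Let x₀,x₁,x₂,x₃, α₁,α₃ be complex numbers, and set X = e^(x₀), U = e^(x₁), Y = e^(x₂), V = e^(x₃), a = e^(−iα₁), b = −e^(−i(α₁+α₃)). Suppose the multiplicative three-leg relation [(1+e^(x₁−x₀+i(π−α₁)))/(1+e^(x₀−x₁+i(π−α₁)))·e^(x₀−x₁)] · [(1+e^(x₂−x₀+i(α₁+α₃)))/(1+e^(x₀−x₂+i(α₁+α₃)))·e^(x₀−x₂)] · [(1+e^(x₃−x₀+i(π−α₃)))/(1+e^(x₀−x₃+i(π−α₃)))·e^(x₀−x₃)] = 1 holds (with all denominators nonzero). Then (a²−1)b(−XU+YV) − (b²−1)a(−XY+UV) + (a²−b²)(−XV+UY) = 0, i.e. Q3(δ=0) holds at (x,u,y,v;α,β) = (−X,U,Y,V;a,b). -/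

import Mathlib

/-- Three-leg to quad correspondence for `Q3(δ=0)`: if the multiplicative
three-leg relation (the exponentiated saddle point equation of the
Faddeev–Volkov star-triangle relation) holds, with all denominators nonzero,
then `Q3(δ=0)` holds at `(x,u,y,v;α,β) = (−X, U, Y, V; a, b)` where
`X = e^(x₀)`, `U = e^(x₁)`, `Y = e^(x₂)`, `V = e^(x₃)`,
`a = e^(−iα₁)`, `b = −e^(−i(α₁+α₃))`. -/
theorem threeLeg_Q3d0 (x₀ x₁ x₂ x₃ α₁ α₃ X U Y V a b : ℂ)
    (hX : X = Complex.exp x₀) (hU : U = Complex.exp x₁)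
    (hY : Y = Complex.exp x₂) (hV : V = Complex.exp x₃)
    (ha : a = Complex.exp (-(Complex.I * α₁)))
    (hb : b = -Complex.exp (-(Complex.I * (α₁ + α₃))))
    (d1 : 1 + Complex.exp (x₀ - x₁ + Complex.I * ((Real.pi : ℂ) - α₁)) ≠ 0)
    (d2 : 1 + Complex.exp (x₀ - x₂ + Complex.I * (α₁ + α₃)) ≠ 0)
    (d3 : 1 + Complex.exp (x₀ - x₃ + Complex.I * ((Real.pi : ℂ) - α₃)) ≠ 0)
    (h : ((1 + Complex.exp (x₁ - x₀ + Complex.I * ((Real.pi : ℂ) - α₁))) /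
            (1 + Complex.exp (x₀ - x₁ + Complex.I * ((Real.pi : ℂ) - α₁))) *
            Complex.exp (x₀ - x₁)) *
         ((1 + Complex.exp (x₂ - x₀ + Complex.I * (α₁ + α₃))) /
            (1 + Complex.exp (x₀ - x₂ + Complex.I * (α₁ + α₃))) *
            Complex.exp (x₀ - x₂)) *
         ((1 + Complex.exp (x₃ - x₀ + Complex.I * ((Real.pi : ℂ) - α₃))) /
            (1 + Complex.exp (x₀ - x₃ + Complex.I * ((Real.pi : ℂ) - α₃))) *
            Complex.exp (x₀ - x₃)) = 1) :
    (a ^ 2 - 1) * b * (-X * U + Y * V) - (b ^ 2 - 1) * a * (-X * Y + U * V)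
      + (a ^ 2 - b ^ 2) * (-X * V + U * Y) = 0 := by

  have hX0 : X ≠ 0 := by rw [hX]; exact Complex.exp_ne_zero _
  have hU0 : U ≠ 0 := by rw [hU]; exact Complex.exp_ne_zero _
  have hY0 : Y ≠ 0 := by rw [hY]; exact Complex.exp_ne_zero _
  have hV0 : V ≠ 0 := by rw [hV]; exact Complex.exp_ne_zero _
  have ha0 : a ≠ 0 := by rw [ha]; exact Complex.exp_ne_zero _
  have hb0 : b ≠ 0 := by rw [hb]; exact neg_ne_zero.mpr (Complex.exp_ne_zero _)
  have hA : Complex.exp (Complex.I * α₁) = a⁻¹ := by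
    rw [ha, ← Complex.exp_neg, neg_neg]
  have hAB : Complex.exp (-(Complex.I * (α₁ + α₃))) = -b := by rw [hb, neg_neg]
  have e1 : Complex.exp (x₁ - x₀ + Complex.I * ((Real.pi : ℂ) - α₁)) = -(U * a) / X := by
    rw [show x₁ - x₀ + Complex.I * ((Real.pi : ℂ) - α₁)
        = (Real.pi : ℂ) * Complex.I + -(Complex.I * α₁) + x₁ - x₀ by ring,
      Complex.exp_sub, Complex.exp_add, Complex.exp_add, Complex.exp_pi_mul_I,
      ← ha, ← hX, ← hU]
    ring
  have e2 : Complex.exp (x₀ - x₁ + Complex.I * ((Real.pi : ℂ) - α₁)) = -(X * a) / U := by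
    rw [show x₀ - x₁ + Complex.I * ((Real.pi : ℂ) - α₁)
        = (Real.pi : ℂ) * Complex.I + -(Complex.I * α₁) + x₀ - x₁ by ring,
      Complex.exp_sub, Complex.exp_add, Complex.exp_add, Complex.exp_pi_mul_I,
      ← ha, ← hX, ← hU]
    ring
  have e3 : Complex.exp (x₂ - x₀ + Complex.I * (α₁ + α₃)) = Y / (-b * X) := by
    rw [show x₂ - x₀ + Complex.I * (α₁ + α₃)
        = x₂ - (-(Complex.I * (α₁ + α₃)) + x₀) by ring,
      Complex.exp_sub, Complex.exp_add, hAB, ← hY, ← hX]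
  have e4 : Complex.exp (x₀ - x₂ + Complex.I * (α₁ + α₃)) = X / (-b * Y) := by
    rw [show x₀ - x₂ + Complex.I * (α₁ + α₃)
        = x₀ - (-(Complex.I * (α₁ + α₃)) + x₂) by ring,
      Complex.exp_sub, Complex.exp_add, hAB, ← hY, ← hX]
  have e5 : Complex.exp (x₃ - x₀ + Complex.I * ((Real.pi : ℂ) - α₃)) = b * V / (a * X) := by
    rw [show x₃ - x₀ + Complex.I * ((Real.pi : ℂ) - α₃)
        = (Real.pi : ℂ) * Complex.I + Complex.I * α₁ + -(Complex.I * (α₁ + α₃)) + x₃ - x₀ by ring,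
      Complex.exp_sub, Complex.exp_add, Complex.exp_add, Complex.exp_add,
      Complex.exp_pi_mul_I, hA, hAB, ← hV, ← hX]
    field_simp
  have e6 : Complex.exp (x₀ - x₃ + Complex.I * ((Real.pi : ℂ) - α₃)) = b * X / (a * V) := by
    rw [show x₀ - x₃ + Complex.I * ((Real.pi : ℂ) - α₃)
        = (Real.pi : ℂ) * Complex.I + Complex.I * α₁ + -(Complex.I * (α₁ + α₃)) + x₀ - x₃ by ring,
      Complex.exp_sub, Complex.exp_add, Complex.exp_add, Complex.exp_add,
      Complex.exp_pi_mul_I, hA, hAB, ← hV, ← hX]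
    field_simp
  have e7 : Complex.exp (x₀ - x₁) = X / U := by rw [Complex.exp_sub, ← hX, ← hU]
  have e8 : Complex.exp (x₀ - x₂) = X / Y := by rw [Complex.exp_sub, ← hX, ← hY]
  have e9 : Complex.exp (x₀ - x₃) = X / V := by rw [Complex.exp_sub, ← hX, ← hV]
  rw [e1, e2, e3, e4, e5, e6, e7, e8, e9] at h
  rw [e2] at d1
  rw [e4] at d2
  rw [e6] at d3
  have hne1 : U - X * a ≠ 0 := by
    intro hc; apply d1
    rw [show (1:ℂ) + -(X*a)/U = (U - X*a)/U by field_simp; ring, hc, zero_div]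
  have hne2 : Y * b - X ≠ 0 := by
    intro hc; apply d2
    rw [show (1:ℂ) + X/(-b*Y) = (Y*b - X)/(Y*b) by field_simp; ring, hc, zero_div]
  have hne3 : V * a + X * b ≠ 0 := by
    intro hc; apply d3
    rw [show (1:ℂ) + b*X/(a*V) = (V*a + X*b)/(a*V) by field_simp, hc, zero_div]
  have hne1' : U + -(X * a) ≠ 0 := by rw [← sub_eq_add_neg]; exact hne1
  have hne2' : -(b * Y) + X ≠ 0 := by rw [add_comm, ← sub_eq_add_neg]; exact fun hc => hne2 (by linear_combination -hc)
  have hne3' : a * V + b * X ≠ 0 := fun hc => hne3 (by linear_combination hc)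
  field_simp [hne1', hne2', hne3'] at h
  rw [div_eq_one_iff_eq (by intro hc; apply mul_ne_zero (mul_ne_zero hne1 hne2) hne3; linear_combination hc :
    (U + -(a * X)) * (Y * b + -X) * (a * V + X * b) ≠ 0)] at h
  have hc0 : a * b * U * Y * V * X ^ 4 ≠ 0 :=
    mul_ne_zero (mul_ne_zero (mul_ne_zero (mul_ne_zero (mul_ne_zero ha0 hb0) hU0) hY0) hV0)
      (pow_ne_zero 4 hX0)
  have hq : a * b * U * Y * V * X ^ 4 * ((a ^ 2 - 1) * b * (-X * U + Y * V)
      - (b ^ 2 - 1) * a * (-X * Y + U * V)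
      + (a ^ 2 - b ^ 2) * (-X * V + U * Y)) = 0 := by
    linear_combination (a * b * U * Y * V * X ^ 3) * h
  exact (mul_eq_zero.mp hq).resolve_left hc0
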